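/- Let A ∈ ℍ^{n×m}, B ∈ ℍ^{n×l}, C ∈ ℍ^{k×m}, D ∈ ℍ^{l₁×l}, E ∈ ℍ^{k×l₂}. Then rank of the block matrix [[A, B L_D], [R_E C, 0]] equals rank of [[A, B, 0], [C, 0, E], [0, D, 0]] minus rank(E) minus rank(D). -/

import Mathlib

open Matrix MulOpposite

noncomputable section

/-- The rank of a quaternion matrix: the dimension of its column space as a
right ℍ-module (i.e. as a module over ℍᵐᵒᵖ). -/
def qrank {m n : ℕ} (A : Matrix (Fin m) (Fin n) (Quaternion ℝ)) : ℕ :=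
  Module.finrank (Quaternion ℝ)ᵐᵒᵖ
    (Submodule.span (Quaternion ℝ)ᵐᵒᵖ (Set.range Aᵀ))

namespace MSAux

local notation "H" => Quaternion ℝ

instance : Module.Finite Hᵐᵒᵖ H := by
  refine ⟨⟨{1}, ?_⟩⟩
  rw [eq_top_iff]; intro x _
  simpa using Submodule.smul_mem _ (op x) (Submodule.subset_span (s := ({1} : Set H)) rfl)

instance (α : Type*) [Fintype α] : Module.Finite Hᵐᵒᵖ (α → H) := Module.Finite.pi

set_option linter.unusedSectionVars false

variable {α β γ δ : Type*} [Fintype α] [Fintype β] [Fintype γ] [Fintype δ]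

/-- `mulVec` as an `Hᵐᵒᵖ`-linear map. -/
def mvLin (A : Matrix α β H) : (β → H) →ₗ[Hᵐᵒᵖ] (α → H) where
  toFun := A.mulVec
  map_add' x y := Matrix.mulVec_add A x y
  map_smul' q x := funext fun i => by
    simp [Matrix.mulVec, dotProduct, op_smul_eq_mul, Finset.sum_mul, mul_assoc]

lemma mvLin_apply (A : Matrix α β H) (x : β → H) : mvLin A x = A.mulVec x := rfl

lemma mvLin_mul (A : Matrix α β H) (B : Matrix β γ H) :
    mvLin (A * B) = (mvLin A).comp (mvLin B) :=
  LinearMap.ext fun x => by simp [mvLin_apply, mulVec_mulVec]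

lemma mvLin_one [DecidableEq α] : mvLin (1 : Matrix α α H) = LinearMap.id :=
  LinearMap.ext fun x => by simp [mvLin_apply, one_mulVec]

/-- rank of a matrix as the dimension of the range of `mvLin`. -/
def qrk (A : Matrix α β H) : ℕ := Module.finrank Hᵐᵒᵖ (LinearMap.range (mvLin A))

lemma span_range_transpose [DecidableEq β] (A : Matrix α β H) :
    Submodule.span Hᵐᵒᵖ (Set.range Aᵀ) = LinearMap.range (mvLin A) := by
  apply le_antisymm
  · rw [Submodule.span_le]
    rintro _ ⟨j, rfl⟩
    exact ⟨Pi.single j 1, funext fun i => by simp [mvLin_apply, mulVec_single]⟩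
  · rintro _ ⟨x, rfl⟩
    have : (mvLin A) x = ∑ j, op (x j) • Aᵀ j := by
      refine funext fun i => ?_
      simp [mvLin_apply, Matrix.mulVec, dotProduct, op_smul_eq_mul, Finset.sum_apply]
    rw [this]
    exact Submodule.sum_mem _ fun j _ =>
      Submodule.smul_mem _ _ (Submodule.subset_span ⟨j, rfl⟩)

lemma qrank_eq_qrk {m n : ℕ} (A : Matrix (Fin m) (Fin n) H) : qrank A = qrk A := by
  rw [qrank, span_range_transpose]; rfl

lemma finrank_map_of_injective {V W : Type*} [AddCommGroup V] [Module Hᵐᵒᵖ V]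
    [AddCommGroup W] [Module Hᵐᵒᵖ W] (f : V →ₗ[Hᵐᵒᵖ] W) (hf : Function.Injective f)
    (p : Submodule Hᵐᵒᵖ V) :
    Module.finrank Hᵐᵒᵖ (p.map f) = Module.finrank Hᵐᵒᵖ p :=
  (LinearEquiv.finrank_eq (Submodule.equivMapOfInjective f hf p)).symm

lemma mvLin_injective_of_left_inverse (A : Matrix α β H) (A' : Matrix β α H)
    [DecidableEq β] (h : A' * A = 1) : Function.Injective (mvLin A) := by
  have h2 : (mvLin A').comp (mvLin A) = LinearMap.id := by
    rw [← mvLin_mul, h, mvLin_one]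
  intro x y hxy
  have := congrArg (mvLin A') hxy
  simpa [← LinearMap.comp_apply, h2] using this

lemma mvLin_surjective_of_right_inverse (A : Matrix α β H) (A' : Matrix β α H)
    [DecidableEq α] (h : A * A' = 1) : Function.Surjective (mvLin A) := by
  have h2 : (mvLin A).comp (mvLin A') = LinearMap.id := by
    rw [← mvLin_mul, h, mvLin_one]
  intro v
  exact ⟨mvLin A' v, by rw [← LinearMap.comp_apply, h2]; rfl⟩

lemma range_mvLin_mul_right (A : Matrix α β H) (Q : Matrix β γ H) (Q' : Matrix γ β H)
    [DecidableEq β] (h : Q * Q' = 1) :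
    LinearMap.range (mvLin (A * Q)) = LinearMap.range (mvLin A) := by
  apply le_antisymm
  · rw [mvLin_mul]
    rintro _ ⟨x, rfl⟩
    exact ⟨mvLin Q x, rfl⟩
  · rintro _ ⟨x, rfl⟩
    refine ⟨mvLin Q' x, ?_⟩
    have hA : (A * Q) * Q' = A := by rw [Matrix.mul_assoc, h, Matrix.mul_one]
    calc (mvLin (A * Q)) ((mvLin Q') x) = mvLin ((A * Q) * Q') x := by
          rw [mvLin_mul (A * Q) Q', LinearMap.comp_apply]
      _ = mvLin A x := by rw [hA]

lemma qrk_mul_right (A : Matrix α β H) (Q : Matrix β γ H) (Q' : Matrix γ β H)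
    [DecidableEq β] (h : Q * Q' = 1) : qrk (A * Q) = qrk A := by
  rw [qrk, range_mvLin_mul_right A Q Q' h]; rfl

lemma qrk_mul_left (P : Matrix α β H) (P' : Matrix β α H) (A : Matrix β γ H)
    [DecidableEq β] (h : P' * P = 1) : qrk (P * A) = qrk A := by
  rw [qrk, mvLin_mul, LinearMap.range_comp,
    finrank_map_of_injective _ (mvLin_injective_of_left_inverse P P' h)]
  rfl


section Step2

variable {ιn ιk ιl₁ ιm ιl ιl₂ : Type*}
  [Fintype ιn] [Fintype ιk] [Fintype ιl₁] [Fintype ιm] [Fintype ιl] [Fintype ιl₂]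
  [DecidableEq ιn] [DecidableEq ιk] [DecidableEq ιl₁] [DecidableEq ιm] [DecidableEq ιl]
  [DecidableEq ιl₂]

lemma blockmv (A : Matrix ιn ιm H) (B' : Matrix ιn ιl H) (C' : Matrix ιk ιm H)
    (E : Matrix ιk ιl₂ H) (D : Matrix ιl₁ ιl H) (x : (ιm ⊕ (ιl ⊕ ιl₂)) → H) :
    (fromBlocks A (fromCols B' 0) (fromRows C' 0) (fromBlocks 0 E D 0)) *ᵥ x =
      Sum.elim (A *ᵥ (x ∘ Sum.inl) + B' *ᵥ (x ∘ Sum.inr ∘ Sum.inl))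
        (Sum.elim (C' *ᵥ (x ∘ Sum.inl) + E *ᵥ (x ∘ Sum.inr ∘ Sum.inr))
          (D *ᵥ (x ∘ Sum.inr ∘ Sum.inl))) := by
  have hx : x = Sum.elim (x ∘ Sum.inl)
      (Sum.elim (x ∘ Sum.inr ∘ Sum.inl) (x ∘ Sum.inr ∘ Sum.inr)) := by
    funext j; rcases j with j | (j | j) <;> rfl
  have key : (fromBlocks A (fromCols B' 0) (fromRows C' 0) (fromBlocks 0 E D 0)) *ᵥ x
      = (fromBlocks A (fromCols B' 0) (fromRows C' 0) (fromBlocks 0 E D 0)) *ᵥ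
        (Sum.elim (x ∘ Sum.inl)
          (Sum.elim (x ∘ Sum.inr ∘ Sum.inl) (x ∘ Sum.inr ∘ Sum.inr))) := by rw [← hx]
  rw [key, fromBlocks_mulVec]
  funext i; rcases i with i | (i | i) <;>
    simp [fromCols_mulVec_sumElim, fromRows_mulVec, fromBlocks_mulVec,
      Sum.elim_comp_inl, Sum.elim_comp_inr, zero_mulVec, mulVec_zero]

lemma step2 (A : Matrix ιn ιm H) (B' : Matrix ιn ιl H) (C' : Matrix ιk ιm H)
    (D : Matrix ιl₁ ιl H) (E : Matrix ιk ιl₂ H) (Dd : Matrix ιl ιl₁ H) (Ed : Matrix ιl₂ ιk H)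
    (hBD : B' * (Dd * D) = 0) (hDD : D * (Dd * D) = D)
    (hEC : (E * Ed) * C' = 0) (hEE : (E * Ed) * E = E) :
    qrk (fromBlocks A (fromCols B' 0) (fromRows C' 0) (fromBlocks 0 E D 0)) =
      qrk (fromBlocks A B' C' 0) + qrk E + qrk D := by
  set N' : Matrix (ιn ⊕ (ιk ⊕ ιl₁)) (ιm ⊕ (ιl ⊕ ιl₂)) H :=
    fromBlocks A (fromCols B' 0) (fromRows C' 0) (fromBlocks 0 E D 0) with hN'
  set M : Matrix (ιn ⊕ ιk) (ιm ⊕ ιl) H := fromBlocks A B' C' 0 with hM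
  set N₂ : Matrix (ιn ⊕ (ιk ⊕ ιl₁)) (ιm ⊕ (ιl ⊕ ιl₂)) H :=
    fromBlocks A (fromCols B' 0) (fromRows C' 0) (fromBlocks 0 E 0 0) with hN₂
  set N₃ : Matrix (ιn ⊕ (ιk ⊕ ιl₁)) (ιm ⊕ (ιl ⊕ ιl₂)) H :=
    fromBlocks A (fromCols B' 0) (fromRows C' 0) (fromBlocks 0 0 0 0) with hN₃
  set N₄ : Matrix (ιn ⊕ (ιk ⊕ ιl₁)) (ιm ⊕ (ιl ⊕ ιl₂)) H :=
    fromBlocks 0 (fromCols 0 0) (fromRows 0 0) (fromBlocks 0 E 0 0) with hN₄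
  set S : Submodule Hᵐᵒᵖ ((ιn ⊕ (ιk ⊕ ιl₁)) → H) := LinearMap.range (mvLin N') with hS
  set π : ((ιn ⊕ (ιk ⊕ ιl₁)) → H) →ₗ[Hᵐᵒᵖ] (ιl₁ → H) :=
    LinearMap.funLeft Hᵐᵒᵖ H (Sum.inr ∘ Sum.inr) with hπ
  -- rank-nullity for the submodule S along π
  have claim1 : Module.finrank Hᵐᵒᵖ S =
      Module.finrank Hᵐᵒᵖ ↥(S.map π) + Module.finrank Hᵐᵒᵖ ↥(S ⊓ LinearMap.ker π) := by
    have h := LinearMap.finrank_range_add_finrank_ker (π.comp S.subtype)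
    rw [LinearMap.range_comp, Submodule.range_subtype, LinearMap.ker_comp] at h
    have hker : Module.finrank Hᵐᵒᵖ ↥(Submodule.comap S.subtype (LinearMap.ker π)) =
        Module.finrank Hᵐᵒᵖ ↥(S ⊓ LinearMap.ker π) := by
      rw [← Submodule.map_comap_subtype]
      exact (finrank_map_of_injective S.subtype S.injective_subtype _).symm
    omega
  -- the composite π ∘ mvLin N'
  have hπN' : π ∘ₗ mvLin N' =
      (mvLin D).comp (LinearMap.funLeft Hᵐᵒᵖ H (Sum.inr ∘ Sum.inl)) := by
    refine LinearMap.ext fun x => funext fun i => ?_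
    simp only [LinearMap.comp_apply, hπ, LinearMap.funLeft_apply, mvLin_apply,
      Function.comp_apply, hN', blockmv, Sum.elim_inr]
    rfl
  have claim2 : S.map π = LinearMap.range (mvLin D) := by
    rw [hS, ← LinearMap.range_comp, hπN', LinearMap.range_comp,
      LinearMap.range_eq_top.mpr (LinearMap.funLeft_surjective_of_injective Hᵐᵒᵖ H _
        (Sum.inr_injective.comp Sum.inl_injective)), Submodule.map_top]
  have claim3 : S ⊓ LinearMap.ker π = LinearMap.range (mvLin N₂) := by
    apply le_antisymm
    · rintro v ⟨hvS, hvK⟩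
      obtain ⟨x, rfl⟩ := hvS
      have hD0 : D *ᵥ (x ∘ (Sum.inr ∘ Sum.inl)) = 0 := by
        have h0 : π ((mvLin N') x) = 0 := LinearMap.mem_ker.mp hvK
        rw [← LinearMap.comp_apply, hπN'] at h0
        exact h0
      refine ⟨x, ?_⟩
      rw [mvLin_apply, mvLin_apply, hN', hN₂, blockmv, blockmv, zero_mulVec]
      rw [show x ∘ Sum.inr ∘ Sum.inl = x ∘ (Sum.inr ∘ Sum.inl) from rfl, hD0]
    · rintro _ ⟨x, rfl⟩
      constructor
      · refine ⟨Sum.elim (x ∘ Sum.inl)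
          (Sum.elim ((1 - Dd * D) *ᵥ (x ∘ Sum.inr ∘ Sum.inl)) (x ∘ Sum.inr ∘ Sum.inr)), ?_⟩
        rw [mvLin_apply, mvLin_apply, hN', hN₂, blockmv, blockmv]
        have e1 : (Sum.elim (x ∘ Sum.inl)
            (Sum.elim ((1 - Dd * D) *ᵥ (x ∘ Sum.inr ∘ Sum.inl)) (x ∘ Sum.inr ∘ Sum.inr)))
            ∘ Sum.inl = x ∘ Sum.inl := rfl
        have e2 : (Sum.elim (x ∘ Sum.inl)
            (Sum.elim ((1 - Dd * D) *ᵥ (x ∘ Sum.inr ∘ Sum.inl)) (x ∘ Sum.inr ∘ Sum.inr)))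
            ∘ Sum.inr ∘ Sum.inl = (1 - Dd * D) *ᵥ (x ∘ Sum.inr ∘ Sum.inl) := rfl
        have e3 : (Sum.elim (x ∘ Sum.inl)
            (Sum.elim ((1 - Dd * D) *ᵥ (x ∘ Sum.inr ∘ Sum.inl)) (x ∘ Sum.inr ∘ Sum.inr)))
            ∘ Sum.inr ∘ Sum.inr = x ∘ Sum.inr ∘ Sum.inr := rfl
        have h1 : B' *ᵥ ((1 - Dd * D) *ᵥ (x ∘ Sum.inr ∘ Sum.inl)) =
            B' *ᵥ (x ∘ Sum.inr ∘ Sum.inl) := by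
          rw [mulVec_mulVec, Matrix.mul_sub, Matrix.mul_one, hBD, sub_zero]
        have h2 : D *ᵥ ((1 - Dd * D) *ᵥ (x ∘ Sum.inr ∘ Sum.inl)) = 0 := by
          rw [mulVec_mulVec, Matrix.mul_sub, Matrix.mul_one, hDD, sub_self, zero_mulVec]
        rw [e1, e2, e3, h1, h2, zero_mulVec]
      · have : π ((mvLin N₂) x) = 0 := by
          funext i
          simp only [hπ, LinearMap.funLeft_apply, mvLin_apply, hN₂, blockmv,
            Function.comp_apply, Sum.elim_inr, zero_mulVec]
        exact this
  have hN₂add : N₂ = N₃ + N₄ := by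
    rw [hN₂, hN₃, hN₄]
    ext (i | i | i) (j | j | j) <;> simp
  have claim4 : LinearMap.range (mvLin N₂) =
      LinearMap.range (mvLin N₃) ⊔ LinearMap.range (mvLin N₄) := by
    apply le_antisymm
    · rintro _ ⟨x, rfl⟩
      have : (mvLin N₂) x = (mvLin N₃) x + (mvLin N₄) x := by
        rw [mvLin_apply, mvLin_apply, mvLin_apply, hN₂add, add_mulVec]
      rw [this]
      exact Submodule.add_mem_sup ⟨x, rfl⟩ ⟨x, rfl⟩
    · apply sup_le
      · rintro _ ⟨x, rfl⟩
        refine ⟨Sum.elim (x ∘ Sum.inl) (Sum.elim (x ∘ Sum.inr ∘ Sum.inl) 0), ?_⟩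
        rw [mvLin_apply, mvLin_apply, hN₂, hN₃, blockmv, blockmv]
        have e1 : (Sum.elim (x ∘ Sum.inl) (Sum.elim (x ∘ Sum.inr ∘ Sum.inl) (0 : ιl₂ → H)))
            ∘ Sum.inl = x ∘ Sum.inl := rfl
        have e2 : (Sum.elim (x ∘ Sum.inl) (Sum.elim (x ∘ Sum.inr ∘ Sum.inl) (0 : ιl₂ → H)))
            ∘ Sum.inr ∘ Sum.inl = x ∘ Sum.inr ∘ Sum.inl := rfl
        have e3 : (Sum.elim (x ∘ Sum.inl) (Sum.elim (x ∘ Sum.inr ∘ Sum.inl) (0 : ιl₂ → H)))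
            ∘ Sum.inr ∘ Sum.inr = (0 : ιl₂ → H) := rfl
        rw [e1, e2, e3, zero_mulVec, zero_mulVec, mulVec_zero]
      · rintro _ ⟨x, rfl⟩
        refine ⟨Sum.elim 0 (Sum.elim 0 (x ∘ Sum.inr ∘ Sum.inr)), ?_⟩
        rw [mvLin_apply, mvLin_apply, hN₂, hN₄, blockmv, blockmv]
        have e1 : (Sum.elim (0 : ιm → H) (Sum.elim (0 : ιl → H) (x ∘ Sum.inr ∘ Sum.inr)))
            ∘ Sum.inl = (0 : ιm → H) := rfl
        have e2 : (Sum.elim (0 : ιm → H) (Sum.elim (0 : ιl → H) (x ∘ Sum.inr ∘ Sum.inr)))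
            ∘ Sum.inr ∘ Sum.inl = (0 : ιl → H) := rfl
        have e3 : (Sum.elim (0 : ιm → H) (Sum.elim (0 : ιl → H) (x ∘ Sum.inr ∘ Sum.inr)))
            ∘ Sum.inr ∘ Sum.inr = x ∘ Sum.inr ∘ Sum.inr := rfl
        rw [e1, e2, e3]
        funext j; rcases j with j | (j | j) <;> simp [zero_mulVec, mulVec_zero]
  have claim5 : LinearMap.range (mvLin N₃) ⊓ LinearMap.range (mvLin N₄) = ⊥ := by
    rw [eq_bot_iff]
    rintro v ⟨hv₃, hv₄⟩
    obtain ⟨x, hx⟩ := hv₃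
    obtain ⟨w, hw⟩ := hv₄
    rw [mvLin_apply, hN₃, blockmv] at hx
    rw [mvLin_apply, hN₄, blockmv] at hw
    simp only [zero_mulVec, mulVec_zero, add_zero, zero_add] at hx hw
    have hk : E *ᵥ (w ∘ Sum.inr ∘ Sum.inr) = C' *ᵥ (x ∘ Sum.inl) := by
      funext i
      have h1 := congrFun hx (Sum.inr (Sum.inl i))
      have h2 := congrFun hw (Sum.inr (Sum.inl i))
      simp only [Sum.elim_inr, Sum.elim_inl] at h1 h2
      rw [h2, ← h1]
    have hEz : E *ᵥ (w ∘ Sum.inr ∘ Sum.inr) = 0 := by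
      have h1 : E *ᵥ (w ∘ Sum.inr ∘ Sum.inr) =
          (E * Ed) *ᵥ (E *ᵥ (w ∘ Sum.inr ∘ Sum.inr)) := by
        rw [mulVec_mulVec, hEE]
      rw [h1, hk, mulVec_mulVec, hEC, zero_mulVec]
    rw [Submodule.mem_bot, ← hw, hEz]
    funext j; rcases j with j | (j | j) <;> rfl
  have hranksum : Module.finrank Hᵐᵒᵖ (LinearMap.range (mvLin N₂)) =
      Module.finrank Hᵐᵒᵖ (LinearMap.range (mvLin N₃)) +
      Module.finrank Hᵐᵒᵖ (LinearMap.range (mvLin N₄)) := by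
    have h := Submodule.finrank_sup_add_finrank_inf_eq
      (LinearMap.range (mvLin N₃)) (LinearMap.range (mvLin N₄))
    rw [claim5, finrank_bot, ← claim4] at h
    omega
  -- finrank of range N₃ is qrk M
  have hV₁ : Module.finrank Hᵐᵒᵖ (LinearMap.range (mvLin N₃)) = qrk M := by
    set J : Matrix (ιn ⊕ (ιk ⊕ ιl₁)) (ιn ⊕ ιk) H :=
      fromBlocks 1 0 0 (fromRows 1 0) with hJ
    set J' : Matrix (ιn ⊕ ιk) (ιn ⊕ (ιk ⊕ ιl₁)) H :=
      fromBlocks 1 0 0 (fromCols 1 0) with hJ'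
    have hJ'J : J' * J = 1 := by
      rw [hJ', hJ, fromBlocks_multiply]
      simp [fromCols_mul_fromRows, fromBlocks_one]
    set r₃ : ((ιm ⊕ (ιl ⊕ ιl₂)) → H) →ₗ[Hᵐᵒᵖ] ((ιm ⊕ ιl) → H) :=
      LinearMap.funLeft Hᵐᵒᵖ H (Sum.map id Sum.inl) with hr₃
    have hcomp : mvLin N₃ = (mvLin J).comp ((mvLin M).comp r₃) := by
      refine LinearMap.ext fun x => ?_
      simp only [LinearMap.comp_apply, hr₃, mvLin_apply]
      have hfl : (LinearMap.funLeft Hᵐᵒᵖ H (Sum.map id Sum.inl)) x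
          = x ∘ Sum.map id Sum.inl := rfl
      rw [hfl, hN₃, blockmv, hM, hJ]
      rw [fromBlocks_mulVec, fromBlocks_mulVec]
      have e1 : (x ∘ Sum.map id Sum.inl) ∘ Sum.inl = x ∘ Sum.inl := by
        funext j; rfl
      have e2 : (x ∘ Sum.map id Sum.inl) ∘ Sum.inr = x ∘ Sum.inr ∘ Sum.inl := by
        funext j; rfl
      rw [e1, e2]
      funext i; rcases i with i | (i | i) <;>
        simp [fromRows_mulVec, zero_mulVec, mulVec_zero, one_mulVec,
          Sum.elim_comp_inl, Sum.elim_comp_inr]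
    have hsurj : Function.Surjective r₃ :=
      LinearMap.funLeft_surjective_of_injective Hᵐᵒᵖ H _
        (Sum.map_injective.mpr ⟨Function.injective_id, Sum.inl_injective⟩)
    rw [hcomp, LinearMap.range_comp, LinearMap.range_comp,
      LinearMap.range_eq_top.mpr hsurj, Submodule.map_top,
      finrank_map_of_injective _ (mvLin_injective_of_left_inverse J J' hJ'J)]
    rfl
  -- finrank of range N₄ is qrk E
  have hV₂ : Module.finrank Hᵐᵒᵖ (LinearMap.range (mvLin N₄)) = qrk E := by
    set JE : Matrix (ιn ⊕ (ιk ⊕ ιl₁)) ιk H := fromRows 0 (fromRows 1 0) with hJE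
    set JE' : Matrix ιk (ιn ⊕ (ιk ⊕ ιl₁)) H := fromCols 0 (fromCols 1 0) with hJE'
    have hJEJE : JE' * JE = 1 := by
      rw [hJE', hJE, fromCols_mul_fromRows]
      simp [fromCols_mul_fromRows]
    set r₄ : ((ιm ⊕ (ιl ⊕ ιl₂)) → H) →ₗ[Hᵐᵒᵖ] (ιl₂ → H) :=
      LinearMap.funLeft Hᵐᵒᵖ H (Sum.inr ∘ Sum.inr) with hr₄
    have hcomp : mvLin N₄ = (mvLin JE).comp ((mvLin E).comp r₄) := by
      refine LinearMap.ext fun x => ?_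
      simp only [LinearMap.comp_apply, hr₄, mvLin_apply]
      have hfl : (LinearMap.funLeft Hᵐᵒᵖ H ((Sum.inr ∘ Sum.inr) : ιl₂ → ιm ⊕ (ιl ⊕ ιl₂))) x
          = x ∘ (Sum.inr ∘ Sum.inr) := rfl
      rw [hfl, hN₄, blockmv, hJE]
      funext i; rcases i with i | (i | i) <;>
        simp [fromRows_mulVec, zero_mulVec, mulVec_zero, one_mulVec,
          Sum.elim_comp_inl, Sum.elim_comp_inr]
    have hsurj : Function.Surjective r₄ :=
      LinearMap.funLeft_surjective_of_injective Hᵐᵒᵖ H _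
        (Sum.inr_injective.comp Sum.inr_injective)
    rw [hcomp, LinearMap.range_comp, LinearMap.range_comp,
      LinearMap.range_eq_top.mpr hsurj, Submodule.map_top,
      finrank_map_of_injective _ (mvLin_injective_of_left_inverse JE JE' hJEJE)]
    rfl
  have hfinal : Module.finrank Hᵐᵒᵖ S = qrk M + qrk E + qrk D := by
    rw [claim1, claim2, claim3, hranksum, hV₁, hV₂]
    have : Module.finrank Hᵐᵒᵖ (LinearMap.range (mvLin D)) = qrk D := rfl
    omega
  exact hfinal


lemma step1 (A : Matrix ιn ιm H) (B : Matrix ιn ιl H) (C : Matrix ιk ιm H)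
    (D : Matrix ιl₁ ιl H) (E : Matrix ιk ιl₂ H) (Dd : Matrix ιl ιl₁ H) (Ed : Matrix ιl₂ ιk H) :
    qrk (fromBlocks A (fromCols B 0) (fromRows C 0) (fromBlocks 0 E D 0)) =
      qrk (fromBlocks A (fromCols (B - B * (Dd * D)) 0)
        (fromRows (C - E * (Ed * C)) 0) (fromBlocks 0 E D 0)) := by
  set X : Matrix ιn (ιk ⊕ ιl₁) H := fromCols 0 (-(B * Dd)) with hX
  set P : Matrix (ιn ⊕ (ιk ⊕ ιl₁)) (ιn ⊕ (ιk ⊕ ιl₁)) H := fromBlocks 1 X 0 1 with hP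
  set P' : Matrix (ιn ⊕ (ιk ⊕ ιl₁)) (ιn ⊕ (ιk ⊕ ιl₁)) H := fromBlocks 1 (-X) 0 1 with hP'
  have hP'P : P' * P = 1 := by
    rw [hP', hP, fromBlocks_multiply]
    simp only [Matrix.one_mul, Matrix.mul_one, Matrix.zero_mul, Matrix.mul_zero,
      add_zero, zero_add, neg_add_cancel, add_neg_cancel]
    exact fromBlocks_one
  set Y : Matrix (ιl ⊕ ιl₂) ιm H := fromRows 0 (-(Ed * C)) with hY
  set Q : Matrix (ιm ⊕ (ιl ⊕ ιl₂)) (ιm ⊕ (ιl ⊕ ιl₂)) H := fromBlocks 1 0 Y 1 with hQ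
  set Q' : Matrix (ιm ⊕ (ιl ⊕ ιl₂)) (ιm ⊕ (ιl ⊕ ιl₂)) H := fromBlocks 1 0 (-Y) 1 with hQ'
  have hQQ' : Q * Q' = 1 := by
    rw [hQ, hQ', fromBlocks_multiply]
    simp only [Matrix.one_mul, Matrix.mul_one, Matrix.zero_mul, Matrix.mul_zero,
      add_zero, zero_add, neg_add_cancel, add_neg_cancel]
    exact fromBlocks_one
  have hXfR : X * fromRows C (0 : Matrix ιl₁ ιm H) = (0 : Matrix ιn ιm H) := by
    rw [hX, fromCols_mul_fromRows]
    simp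
  have hXfB : X * fromBlocks 0 E D 0 = fromCols (-(B * (Dd * D))) 0 := by
    rw [hX, ← fromRows_fromCols_eq_fromBlocks, fromCols_mul_fromRows, mul_fromCols]
    simp [Matrix.mul_assoc]
  have hcolsadd : fromCols B (0 : Matrix ιn ιl₂ H) + fromCols (-(B * (Dd * D))) 0 =
      fromCols (B - B * (Dd * D)) 0 := by
    ext i (j | j) <;> simp [sub_eq_add_neg]
  have hPN : P * (fromBlocks A (fromCols B 0) (fromRows C 0) (fromBlocks 0 E D 0)) =
      fromBlocks A (fromCols (B - B * (Dd * D)) 0) (fromRows C 0) (fromBlocks 0 E D 0) := by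
    rw [hP, fromBlocks_multiply, hXfR, hXfB]
    simp [hcolsadd]
  have hCfY : (fromCols (B - B * (Dd * D)) (0 : Matrix ιn ιl₂ H)) * Y = 0 := by
    rw [hY, fromCols_mul_fromRows]
    simp
  have hfBY : fromBlocks 0 E D 0 * Y = fromRows (-(E * (Ed * C))) (0 : Matrix ιl₁ ιm H) := by
    rw [hY, ← fromRows_fromCols_eq_fromBlocks, fromRows_mul, fromCols_mul_fromRows,
      fromCols_mul_fromRows]
    simp
  have hrowsadd : fromRows C (0 : Matrix ιl₁ ιm H) + fromRows (-(E * (Ed * C))) 0 =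
      fromRows (C - E * (Ed * C)) 0 := by
    ext (i | i) j <;> simp [sub_eq_add_neg]
  have hPNQ : P * (fromBlocks A (fromCols B 0) (fromRows C 0) (fromBlocks 0 E D 0)) * Q =
      fromBlocks A (fromCols (B - B * (Dd * D)) 0)
        (fromRows (C - E * (Ed * C)) 0) (fromBlocks 0 E D 0) := by
    rw [hPN, hQ, fromBlocks_multiply, hCfY, hfBY]
    simp [hrowsadd]
  rw [← hPNQ, qrk_mul_right _ Q Q' hQQ', qrk_mul_left P P' _ hP'P]

end Step2

end MSAux

open MSAux in
/-- Marsaglia–Styan rank formula over the quaternions: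
`rank [[A, B L_D], [R_E C, 0]] = rank [[A, B, 0], [C, 0, E], [0, D, 0]] - rank E - rank D`,
where `Dd`, `Ed` are the Moore-Penrose inverses of `D`, `E`. -/
theorem marsaglia_styan_rank {n m l k l₁ l₂ : ℕ}
    (A : Matrix (Fin n) (Fin m) (Quaternion ℝ))
    (B : Matrix (Fin n) (Fin l) (Quaternion ℝ))
    (C : Matrix (Fin k) (Fin m) (Quaternion ℝ))
    (D : Matrix (Fin l₁) (Fin l) (Quaternion ℝ))
    (E : Matrix (Fin k) (Fin l₂) (Quaternion ℝ))
    (Dd : Matrix (Fin l) (Fin l₁) (Quaternion ℝ))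
    (hD1 : D * Dd * D = D) (hD2 : Dd * D * Dd = Dd)
    (hD3 : (D * Dd)ᴴ = D * Dd) (hD4 : (Dd * D)ᴴ = Dd * D)
    (Ed : Matrix (Fin l₂) (Fin k) (Quaternion ℝ))
    (hE1 : E * Ed * E = E) (hE2 : Ed * E * Ed = Ed)
    (hE3 : (E * Ed)ᴴ = E * Ed) (hE4 : (Ed * E)ᴴ = Ed * E) :
    Module.finrank (Quaternion ℝ)ᵐᵒᵖ
      (Submodule.span (Quaternion ℝ)ᵐᵒᵖ
        (Set.range (fromBlocks A (B * (1 - Dd * D)) ((1 - E * Ed) * C) 0)ᵀ)) =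
    Module.finrank (Quaternion ℝ)ᵐᵒᵖ
      (Submodule.span (Quaternion ℝ)ᵐᵒᵖ
        (Set.range (fromBlocks A (fromCols B 0)
          (fromRows C 0) (fromBlocks 0 E D 0))ᵀ)) - qrank E - qrank D := by
  have e1 : B * (1 - Dd * D) = B - B * (Dd * D) := by
    rw [Matrix.mul_sub, Matrix.mul_one]
  have e2 : (1 - E * Ed) * C = C - E * (Ed * C) := by
    rw [Matrix.sub_mul, Matrix.one_mul, Matrix.mul_assoc]
  rw [e1, e2, span_range_transpose, span_range_transpose, qrank_eq_qrk, qrank_eq_qrk]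
  show qrk (fromBlocks A (B - B * (Dd * D)) (C - E * (Ed * C)) 0) =
    qrk (fromBlocks A (fromCols B 0) (fromRows C 0) (fromBlocks 0 E D 0)) - qrk E - qrk D
  have kD : (Dd * D) * (Dd * D) = Dd * D := by
    rw [← Matrix.mul_assoc, hD2]
  have kE : (E * Ed) * (E * Ed) = E * Ed := by
    rw [← Matrix.mul_assoc, hE1]
  have hBD : (B - B * (Dd * D)) * (Dd * D) = 0 := by
    rw [Matrix.sub_mul, Matrix.mul_assoc, kD, sub_self]
  have hDD : D * (Dd * D) = D := by
    rw [← Matrix.mul_assoc, hD1]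
  have hEC : (E * Ed) * (C - E * (Ed * C)) = 0 := by
    rw [Matrix.mul_sub, ← Matrix.mul_assoc, ← Matrix.mul_assoc, hE1, Matrix.mul_assoc, sub_self]
  have hEE : (E * Ed) * E = E := hE1
  have h1 := step1 A B C D E Dd Ed
  have h2 := step2 A (B - B * (Dd * D)) (C - E * (Ed * C)) D E Dd Ed hBD hDD hEC hEE
  omega


end
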